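/- Let 𝓒 be a chain (totally ordered under inclusion) of subsets of ℕ such that ν_N(A) ≤ ν⁺(A) for all N ∈ ℕ and A ∈ 𝓒. Then ν⁺(⋃𝓒) = sup_{A ∈ 𝓒} ν⁺(A). If moreover 𝓒 ⊆ 𝓕, then ⋃𝓒 ∈ 𝓕 and ν(⋃𝓒) = sup_{A ∈ 𝓒} ν(A). -/

import Mathlib

open Filter Set

/-- Partial average ν_N(A) = |A ∩ {1,…,N}| / N. -/
noncomputable def avg (A : Set ℕ) (N : ℕ) : ℝ := ((A ∩ Set.Icc 1 N).ncard : ℝ) / N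

/-- Upper Cesàro limit ν⁺. -/
noncomputable def nuPlus (A : Set ℕ) : ℝ := Filter.limsup (avg A) Filter.atTop

/-- Lower Cesàro limit ν⁻. -/
noncomputable def nuMinus (A : Set ℕ) : ℝ := Filter.liminf (avg A) Filter.atTop

/-- ν(A), defined as ν⁺(A); equals the Cesàro limit whenever it exists. -/
noncomputable def nu (A : Set ℕ) : ℝ := nuPlus A

/-- A ∈ 𝓕 : the Cesàro limit exists (and then equals ν(A) = ν⁺(A)). -/
def memF (A : Set ℕ) : Prop := Filter.Tendsto (avg A) Filter.atTop (nhds (nu A))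

/-- A ∈ 𝓝 : null set, Cesàro limit exists and equals 0. -/
def IsNull (A : Set ℕ) : Prop := Filter.Tendsto (avg A) Filter.atTop (nhds 0)

lemma avg_nonneg' (A : Set ℕ) (N : ℕ) : 0 ≤ avg A N :=
  div_nonneg (Nat.cast_nonneg _) (Nat.cast_nonneg _)

lemma avg_le_one' (A : Set ℕ) (N : ℕ) : avg A N ≤ 1 := by
  rcases Nat.eq_zero_or_pos N with h | h
  · simp [avg, h]
  · rw [avg, div_le_one (by exact_mod_cast h)]
    have h1 : (A ∩ Set.Icc 1 N).ncard ≤ (Set.Icc 1 N : Set ℕ).ncard :=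
      Set.ncard_le_ncard inter_subset_right (Set.finite_Icc _ _)
    have h2 : (Set.Icc 1 N : Set ℕ).ncard = N := by
      rw [← Finset.coe_Icc, Set.ncard_coe_finset, Nat.card_Icc]; omega
    exact_mod_cast h1.trans_eq h2

lemma avg_mono' {A B : Set ℕ} (h : A ⊆ B) (N : ℕ) : avg A N ≤ avg B N := by
  unfold avg
  have hc : (A ∩ Set.Icc 1 N).ncard ≤ (B ∩ Set.Icc 1 N).ncard :=
    Set.ncard_le_ncard (Set.inter_subset_inter_left _ h) ((Set.finite_Icc 1 N).inter_of_right _)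
  gcongr

lemma bdd_le' (A : Set ℕ) : IsBoundedUnder (· ≤ ·) atTop (avg A) :=
  isBoundedUnder_of ⟨1, fun n => avg_le_one' A n⟩

lemma bdd_ge' (A : Set ℕ) : IsBoundedUnder (· ≥ ·) atTop (avg A) :=
  isBoundedUnder_of ⟨0, fun n => avg_nonneg' A n⟩

lemma nuPlus_mono' {A B : Set ℕ} (h : A ⊆ B) : nuPlus A ≤ nuPlus B :=
  limsup_le_limsup (Eventually.of_forall fun n => avg_mono' h n)
    (bdd_ge' A).isCoboundedUnder_le (bdd_le' B)

lemma nuPlus_le_one' (A : Set ℕ) : nuPlus A ≤ 1 :=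
  limsup_le_of_le (bdd_ge' A).isCoboundedUnder_le (Eventually.of_forall fun n => avg_le_one' A n)

lemma chain_cover {𝓒 : Set (Set ℕ)} (hchain : IsChain (· ⊆ ·) 𝓒) (hne : 𝓒.Nonempty)
    {T : Set ℕ} (hT : T.Finite) : T ⊆ ⋃₀ 𝓒 → ∃ A ∈ 𝓒, T ⊆ A := by
  refine Set.Finite.induction_on (motive := fun T _ => T ⊆ ⋃₀ 𝓒 → ∃ A ∈ 𝓒, T ⊆ A) T hT
    (fun _ => ⟨hne.choose, hne.choose_spec, by simp⟩) ?_
  rintro a s - - ih hsub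
  rw [Set.insert_subset_iff] at hsub
  obtain ⟨B, hB, haB⟩ := hsub.1
  obtain ⟨A, hA, hsA⟩ := ih hsub.2
  rcases hchain.total hA hB with h | h
  · exact ⟨B, hB, Set.insert_subset haB (hsA.trans h)⟩
  · exact ⟨A, hA, Set.insert_subset (h haB) hsA⟩

theorem stmt7 (𝓒 : Set (Set ℕ)) (hchain : IsChain (· ⊆ ·) 𝓒)
    (hbd : ∀ A ∈ 𝓒, ∀ N : ℕ, avg A N ≤ nuPlus A) :
    nuPlus (⋃₀ 𝓒) = sSup (nuPlus '' 𝓒) ∧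
    ((∀ A ∈ 𝓒, memF A) → memF (⋃₀ 𝓒) ∧ nu (⋃₀ 𝓒) = sSup (nu '' 𝓒)) := by
  rcases 𝓒.eq_empty_or_nonempty with rfl | hne
  · have h0 : nuPlus (⋃₀ (∅ : Set (Set ℕ))) = 0 := by
      have : avg (⋃₀ (∅ : Set (Set ℕ))) = fun _ => (0 : ℝ) := by
        funext N; simp [avg]
      rw [nuPlus, this, limsup_const]
    refine ⟨by rw [h0]; simp [Real.sSup_empty], fun _ => ⟨?_, by rw [nu, h0]; simp [Real.sSup_empty]⟩⟩
    rw [memF, nu, h0]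
    have : avg (⋃₀ (∅ : Set (Set ℕ))) = fun _ => (0 : ℝ) := by funext N; simp [avg]
    rw [this]; exact tendsto_const_nhds
  · set S := sSup (nuPlus '' 𝓒) with hS
    have hbdd : BddAbove (nuPlus '' 𝓒) := ⟨1, by rintro _ ⟨A, hA, rfl⟩; exact nuPlus_le_one' A⟩
    have hub : ∀ A ∈ 𝓒, nuPlus A ≤ S := fun A hA => le_csSup hbdd ⟨A, hA, rfl⟩
    have step1 : ∀ N, avg (⋃₀ 𝓒) N ≤ S := by
      intro N
      obtain ⟨A₀, hA₀, hcov⟩ := chain_cover hchain hne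
        ((Set.finite_Icc 1 N).inter_of_right (⋃₀ 𝓒)) Set.inter_subset_left
      have heq : (⋃₀ 𝓒) ∩ Set.Icc 1 N = A₀ ∩ Set.Icc 1 N := by
        apply Set.Subset.antisymm
        · exact fun x hx => ⟨hcov hx, hx.2⟩
        · exact Set.inter_subset_inter_left _ (Set.subset_sUnion_of_mem hA₀)
      have : avg (⋃₀ 𝓒) N = avg A₀ N := by rw [avg, avg, heq]
      rw [this]
      exact (hbd A₀ hA₀ N).trans (hub A₀ hA₀)
    have hle : nuPlus (⋃₀ 𝓒) ≤ S :=
      limsup_le_of_le (bdd_ge' _).isCoboundedUnder_le (Eventually.of_forall step1)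
    have hge : S ≤ nuPlus (⋃₀ 𝓒) := by
      apply csSup_le (hne.image _)
      rintro _ ⟨A, hA, rfl⟩
      exact nuPlus_mono' (Set.subset_sUnion_of_mem hA)
    have heq1 : nuPlus (⋃₀ 𝓒) = S := le_antisymm hle hge
    refine ⟨heq1, fun hF => ?_⟩
    have hinf : S ≤ liminf (avg (⋃₀ 𝓒)) atTop := by
      apply csSup_le (hne.image _)
      rintro _ ⟨A, hA, rfl⟩
      have hlimA : liminf (avg A) atTop = nuPlus A := (hF A hA).liminf_eq
      calc nuPlus A = liminf (avg A) atTop := hlimA.symm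
        _ ≤ liminf (avg (⋃₀ 𝓒)) atTop :=
            liminf_le_liminf (Eventually.of_forall fun n =>
              avg_mono' (Set.subset_sUnion_of_mem hA) n) (bdd_ge' A)
              (bdd_le' _).isCoboundedUnder_ge
    have hsup : limsup (avg (⋃₀ 𝓒)) atTop = S := heq1
    have hliminf : liminf (avg (⋃₀ 𝓒)) atTop = S :=
      le_antisymm (le_trans (liminf_le_limsup (bdd_le' _) (bdd_ge' _)) hsup.le) hinf
    have htd : Tendsto (avg (⋃₀ 𝓒)) atTop (nhds S) :=
      tendsto_of_liminf_eq_limsup hliminf hsup (bdd_le' _) (bdd_ge' _)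
    constructor
    · rw [memF, nu, heq1]; exact htd
    · exact heq1
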